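/- In the CCR algebra over a symplectic space (X, B), the central state ω₀ defined by ω₀(δ_f) = 1 if f = 0 and 0 otherwise satisfies ω₀(F*F)^{1/2} = (Σ|λ_i|²)^{1/2} ≤ ‖F‖ ≤ Σ|λ_i| for F = Σ λ_i δ_{f_i} with distinct f_i; in particular ω₀ is a state and the δ_f are linearly independent. -/

import Mathlib

/-! The CCR (Weyl) *-algebra `Δ(X, B)`: finitely supported complex functions on `X` with
basis `δ_f = single f 1`, twisted product and involution, and its central state. -/

/-- Twisted (Weyl) product on `Δ(X,B)`: `δ_f ⬝ δ_h = e^{(i/2) B(f,h)} δ_{f+h}`. -/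
noncomputable def weylMul {X : Type*} [AddCommGroup X] (B : X → X → ℝ)
    (a b : X →₀ ℂ) : X →₀ ℂ :=
  a.sum fun f c => b.sum fun g d =>
    Finsupp.single (f + g) (c * d * Complex.exp (Complex.I * (B f g : ℂ) / 2))

/-- Involution on `Δ(X,B)`: `(δ_f)* = δ_{-f}` (antilinearly extended). -/
noncomputable def weylStar {X : Type*} [AddCommGroup X] (a : X →₀ ℂ) : X →₀ ℂ :=
  a.sum fun f c => Finsupp.single (-f) (starRingEnd ℂ c)

/-- The ℓ¹ norm `‖Σ λᵢ δ_{fᵢ}‖₁ = Σ |λᵢ|`. -/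
noncomputable def l1Norm {X : Type*} (a : X →₀ ℂ) : ℝ := a.sum fun _ c => ‖c‖

/-- The ℓ² norm `(Σ |λᵢ|²)^{1/2}`. -/
noncomputable def l2Norm {X : Type*} (a : X →₀ ℂ) : ℝ :=
  Real.sqrt (a.sum fun _ c => Complex.normSq c)

/-- A state on `Δ₁(X,B)`: normalized (`ω δ₀ = 1`), positive for the twisted product, and
ℓ¹-contractive. -/
def IsStateW {X : Type*} [AddCommGroup X] (B : X → X → ℝ)
    (ω : (X →₀ ℂ) →ₗ[ℂ] ℂ) : Prop :=
  ω (Finsupp.single 0 1) = 1 ∧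
  (∀ a : X →₀ ℂ, ∃ r : ℝ, 0 ≤ r ∧ ω (weylMul B (weylStar a) a) = (r : ℂ)) ∧
  ∀ a : X →₀ ℂ, ‖ω a‖ ≤ l1Norm a

/-- The enveloping C*-(semi)norm: `‖a‖ = sup_ω √(ω(a* a))` over the states of `Δ₁(X,B)`. -/
noncomputable def envNorm {X : Type*} [AddCommGroup X] (B : X → X → ℝ)
    (a : X →₀ ℂ) : ℝ :=
  sSup {r : ℝ | ∃ ω : (X →₀ ℂ) →ₗ[ℂ] ℂ, IsStateW B ω ∧
    r = Real.sqrt (ω (weylMul B (weylStar a) a)).re}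

section Aux

set_option linter.unusedSectionVars false

variable {X : Type*} [AddCommGroup X] [DecidableEq X] (B : X → X → ℝ)

lemma weylStar_apply (a : X →₀ ℂ) (g : X) : weylStar a g = starRingEnd ℂ (a (-g)) := by
  classical
  rw [weylStar, Finsupp.sum_apply]
  simp only [Finsupp.single_apply, neg_eq_iff_eq_neg, Finsupp.sum]
  rw [Finset.sum_ite_eq' a.support (-g)]
  by_cases h : -g ∈ a.support
  · simp [h]
  · simp [h, Finsupp.notMem_support_iff.mp h]

lemma weylMul_apply (x y : X →₀ ℂ) (t : X) :
    weylMul B x y t = ∑ f ∈ x.support, x f * y (t - f) *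
      Complex.exp (Complex.I * (B f (t - f) : ℂ) / 2) := by
  classical
  rw [weylMul, Finsupp.sum_apply]
  rw [Finsupp.sum]
  refine Finset.sum_congr rfl fun f _ => ?_
  rw [Finsupp.sum_apply, Finsupp.sum]
  simp only [Finsupp.single_apply]
  have h1 : ∀ g : X, (f + g = t) = (g = t - f) := fun g => by
    simp [eq_sub_iff_add_eq, add_comm]
  simp only [h1]
  rw [Finset.sum_ite_eq' y.support (t - f)]
  by_cases h : t - f ∈ y.support
  · simp [h]
  · simp [h, Finsupp.notMem_support_iff.mp h]

variable (hBalt : ∀ f g : X, B f g = - B g f) (hBadd : ∀ f g h : X, B (f + g) h = B f h + B g h)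

include hBalt hBadd in
lemma B_neg_self (f : X) : B f (-f) = 0 := by
  have h0 : B 0 f = 0 := by
    have := hBadd 0 0 f; simp at this; linarith [this]
  have hff : B f f = 0 := by have := hBalt f f; linarith
  have : B f f + B (-f) f = 0 := by rw [← hBadd]; simpa using h0
  have := hBalt f (-f); linarith

include hBalt hBadd in
lemma mulStar_zero (a : X →₀ ℂ) :
    weylMul B (weylStar a) a 0 = ((a.sum fun _ c => Complex.normSq c : ℝ) : ℂ) := by
  classical
  rw [weylMul_apply]
  have hsupp : (weylStar a).support = a.support.image Neg.neg := by
    ext f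
    simp only [Finsupp.mem_support_iff, weylStar_apply, Finset.mem_image, ne_eq, map_eq_zero]
    constructor
    · intro h; exact ⟨-f, h, neg_neg f⟩
    · rintro ⟨g, hg, rfl⟩; simpa using hg
  rw [hsupp, Finset.sum_image (fun x _ y _ h => neg_injective h)]
  rw [Finsupp.sum, Complex.ofReal_sum]
  refine Finset.sum_congr rfl fun g _ => ?_
  rw [weylStar_apply]
  have hb := B_neg_self B hBalt hBadd (-g)
  rw [neg_neg] at hb
  simp [hb, Complex.conj_mul', Complex.normSq_eq_norm_sq]

lemma l1_eq (a : X →₀ ℂ) (s : Finset X) (h : a.support ⊆ s) :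
    l1Norm a = ∑ f ∈ s, ‖a f‖ :=
  Finsupp.sum_of_support_subset a h _ (by simp)

lemma l1_nonneg (a : X →₀ ℂ) : 0 ≤ l1Norm a :=
  Finset.sum_nonneg fun _ _ => norm_nonneg _

lemma l1_apply_le (a : X →₀ ℂ) (t : X) : ‖a t‖ ≤ l1Norm a := by
  by_cases h : t ∈ a.support
  · exact Finset.single_le_sum (f := fun f => ‖a f‖)
      (fun _ _ => norm_nonneg _) h
  · simp [Finsupp.notMem_support_iff.mp h, l1_nonneg]

lemma l1_add_le (a b : X →₀ ℂ) : l1Norm (a + b) ≤ l1Norm a + l1Norm b := by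
  rw [l1_eq (a + b) (a.support ∪ b.support) (Finsupp.support_add),
    l1_eq a _ Finset.subset_union_left, l1_eq b _ Finset.subset_union_right,
    ← Finset.sum_add_distrib]
  exact Finset.sum_le_sum fun f _ => by
    simpa [Finsupp.add_apply] using norm_add_le (a f) (b f)

lemma l1_finsum_le {ι : Type*} (s : Finset ι) (g : ι → X →₀ ℂ) :
    l1Norm (∑ i ∈ s, g i) ≤ ∑ i ∈ s, l1Norm (g i) := by
  classical
  induction s using Finset.cons_induction with
  | empty => simp [l1Norm]
  | cons i s his ih =>
    rw [Finset.sum_cons, Finset.sum_cons]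
    exact le_trans (l1_add_le _ _) (by linarith [ih])

lemma l1_single (f : X) (c : ℂ) : l1Norm (Finsupp.single f c) = ‖c‖ := by
  rw [l1Norm, Finsupp.sum_single_index]; simp

lemma l1_mul_le (a b : X →₀ ℂ) : l1Norm (weylMul B a b) ≤ l1Norm a * l1Norm b := by
  rw [weylMul]; simp only [Finsupp.sum]
  refine le_trans (l1_finsum_le _ _) ?_
  rw [l1_eq a a.support le_rfl, l1_eq b b.support le_rfl, Finset.sum_mul_sum]
  refine Finset.sum_le_sum fun f _ => le_trans (l1_finsum_le _ _) ?_
  refine Finset.sum_le_sum fun g _ => ?_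
  rw [l1_single]
  simp [map_mul, Complex.norm_exp]

lemma l1_star_le (a : X →₀ ℂ) : l1Norm (weylStar a) ≤ l1Norm a := by
  rw [weylStar]; simp only [Finsupp.sum]
  refine le_trans (l1_finsum_le _ _) ?_
  rw [l1_eq a a.support le_rfl]
  exact Finset.sum_le_sum fun f _ => by rw [l1_single]; simp

end Aux

/-- In the CCR algebra over a symplectic space `(X,B)` the central state
`ω₀ (δ_f) = [f = 0]` is a state, it satisfies `ω₀(F* F)^{1/2} = (Σ |λᵢ|²)^{1/2}` for
`F = Σ λᵢ δ_{fᵢ}` (distinct `fᵢ`), one has `ℓ² ≤ ‖·‖ ≤ ℓ¹` for the enveloping C*-norm,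
and the `δ_f` are linearly independent. -/
theorem stmt_16 {X : Type*} [AddCommGroup X] [DecidableEq X] (B : X → X → ℝ)
    (hBalt : ∀ f g : X, B f g = - B g f)
    (hBadd : ∀ f g h : X, B (f + g) h = B f h + B g h) :
    ∃ ω₀ : (X →₀ ℂ) →ₗ[ℂ] ℂ,
      IsStateW B ω₀ ∧
      (∀ f : X, ω₀ (Finsupp.single f 1) = if f = 0 then 1 else 0) ∧
      (∀ a : X →₀ ℂ, Real.sqrt (ω₀ (weylMul B (weylStar a) a)).re = l2Norm a) ∧
      (∀ a : X →₀ ℂ, l2Norm a ≤ envNorm B a ∧ envNorm B a ≤ l1Norm a) ∧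
      LinearIndependent ℂ (fun f : X => (Finsupp.single f 1 : X →₀ ℂ)) := by
  classical
  set ω₀ : (X →₀ ℂ) →ₗ[ℂ] ℂ := Finsupp.lapply 0 with hω₀
  have happly : ∀ a : X →₀ ℂ, ω₀ a = a 0 := fun a => rfl
  have hst : IsStateW B ω₀ := by
    refine ⟨by simp [happly], fun a => ?_, fun a => ?_⟩
    · refine ⟨a.sum fun _ c => Complex.normSq c,
        Finset.sum_nonneg fun _ _ => Complex.normSq_nonneg _, ?_⟩
      rw [happly, mulStar_zero B hBalt hBadd]
    · rw [happly]; exact l1_apply_le a 0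
  have hl2 : ∀ a : X →₀ ℂ, Real.sqrt (ω₀ (weylMul B (weylStar a) a)).re = l2Norm a := by
    intro a
    rw [happly, mulStar_zero B hBalt hBadd, l2Norm]
    simp
  refine ⟨ω₀, hst, fun f => by simp [happly, Finsupp.single_apply], hl2, fun a => ?_, ?_⟩
  · have hub : ∀ r ∈ {r : ℝ | ∃ ω : (X →₀ ℂ) →ₗ[ℂ] ℂ, IsStateW B ω ∧
        r = Real.sqrt (ω (weylMul B (weylStar a) a)).re}, r ≤ l1Norm a := by
      rintro r ⟨ω, hω, rfl⟩
      have h1 : (ω (weylMul B (weylStar a) a)).re ≤ l1Norm a * l1Norm a := by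
        refine le_trans (Complex.re_le_norm _) (le_trans (hω.2.2 _) ?_)
        refine le_trans (l1_mul_le B _ _) ?_
        exact mul_le_mul_of_nonneg_right (l1_star_le _) (l1_nonneg a)
      calc Real.sqrt (ω (weylMul B (weylStar a) a)).re
          ≤ Real.sqrt (l1Norm a * l1Norm a) := Real.sqrt_le_sqrt h1
        _ = l1Norm a := Real.sqrt_mul_self (l1_nonneg a)
    have hmem : l2Norm a ∈ {r : ℝ | ∃ ω : (X →₀ ℂ) →ₗ[ℂ] ℂ, IsStateW B ω ∧
        r = Real.sqrt (ω (weylMul B (weylStar a) a)).re} := ⟨ω₀, hst, (hl2 a).symm⟩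
    exact ⟨le_csSup ⟨l1Norm a, hub⟩ hmem, csSup_le ⟨l2Norm a, hmem⟩ hub⟩
  · exact Finsupp.basisSingleOne.linearIndependent
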